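/- Splitting lemma for Γ (base of Lemma 2): Let u be a vertex with a single child u_1, parent edge e_u, ξ ≥ 0, k ≥ 1, l ≥ 0. Then Γ_ξ(u,k,l) equals: min{ξ·ω(T_{u_1})+c(uu_1), Γ_ξ(u_1,k,l)} if μ_ξ(u_1,k−1,l) = 1, and Γ_ξ(u_1,k,l) otherwise. -/

import Mathlib

open scoped Classical

noncomputable section

/-- A finite rooted weighted tree, encoded by a parent function. The root has an
auxiliary parent edge `e_root` of weight `0` (`parent root = root`). Edges are
identified with their lower endpoints: the parent edge `e_v` of a vertex `v`
has weight `c v`. -/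
structure RTree (V : Type) [Fintype V] [DecidableEq V] where
  root : V
  parent : V → V
  w : V → ℚ
  c : V → ℚ
  parent_root : parent root = root
  reaches_root : ∀ v : V, ∃ n : ℕ, parent^[n] v = root
  w_pos : ∀ v : V, 0 < w v
  c_pos : ∀ v : V, v ≠ root → 0 < c v
  c_root : c root = 0

namespace RTree

variable {V : Type} [Fintype V] [DecidableEq V] (T : RTree V)

/-- `v` lies in the subtree rooted at `u` (equivalently, edge `e_v ≤ e_u` in the
natural partial order induced by the root). -/
def below (u v : V) : Prop := ∃ n : ℕ, T.parent^[n] v = u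

/-- The vertex set of the subtree `T_u` (also of `T_{e_u}`). -/
def desc (u : V) : Finset V := Finset.univ.filter (fun v => T.below u v)

/-- Total vertex weight `ω(A)`. -/
def wsum (A : Finset V) : ℚ := ∑ v ∈ A, T.w v

/-- The (lower endpoints of) edges with exactly one endpoint in `A`, relative to a
ground set `W` of edges/vertices (`W = univ` gives the whole tree `T`). -/
def boundaryW (W A : Finset V) : Finset V :=
  W.filter (fun v => Xor' (v ∈ A) (T.parent v ∈ A))

/-- The edge boundary `∂A` in the whole tree. -/
def boundary (A : Finset V) : Finset V := T.boundaryW Finset.univ A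

/-- `c(∂A)` relative to ground set `W`. -/
def cutW (W A : Finset V) : ℚ := ∑ v ∈ T.boundaryW W A, T.c v

/-- `c(∂A)` in the whole tree. -/
def cut (A : Finset V) : ℚ := T.cutW Finset.univ A

/-- Vertex set of the subtree `T_u` relative to the ground set `W`. -/
def descW (W : Finset V) (u : V) : Finset V := T.desc u ∩ W

/-- `ε_ξ(e_v) = ξ·ω(T_{e_v}) + c(e_v)`. -/
def eps (ξ : ℚ) (v : V) : ℚ := ξ * T.wsum (T.desc v) + T.c v

/-- `A` induces a connected subgraph (a subtree) of the tree: some `a ∈ A` is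
reachable from every `v ∈ A` by a parent-chain staying inside `A`. -/
def connectedIn (A : Finset V) : Prop :=
  ∃ a ∈ A, ∀ v ∈ A, ∃ n : ℕ, T.parent^[n] v = a ∧ ∀ m : ℕ, m ≤ n → T.parent^[m] v ∈ A

/-- The children of a vertex. -/
def children (u : V) : Finset V :=
  Finset.univ.filter (fun v => T.parent v = u ∧ v ≠ u)

/-- `A` witnesses `μ_ξ(u,k,l) = 1` relative to ground set `W`: a connected
`k`-subpartition of `T_u` whose parts all have conductance at most `ξ`
(boundaries computed in the ground set), with at most `l` residue vertices. -/
def muWitnessW (W : Finset V) (ξ : ℚ) (u : V) {k : ℕ} (A : Fin k → Finset V) (l : ℕ) : Prop :=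
  (∀ i, (A i).Nonempty) ∧ (∀ i j, i ≠ j → Disjoint (A i) (A j)) ∧
  (∀ i, A i ⊆ T.descW W u) ∧ (∀ i, T.connectedIn (A i)) ∧
  (∀ i, T.cutW W (A i) / T.wsum (A i) ≤ ξ) ∧
  ((T.descW W u \ Finset.univ.biUnion A).card ≤ l)

/-- `μ_ξ(u,k,l) = 1` relative to ground set `W`. -/
def muW (W : Finset V) (ξ : ℚ) (u : V) (k l : ℕ) : Prop :=
  ∃ A : Fin k → Finset V, T.muWitnessW W ξ u A l

/-- `A` witnesses `μ_ξ(u,k,l) = 1` (in the whole tree `T`). -/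
def muWitness (ξ : ℚ) (u : V) {k : ℕ} (A : Fin k → Finset V) (l : ℕ) : Prop :=
  T.muWitnessW Finset.univ ξ u A l

/-- `μ_ξ(u,k,l) = 1`. -/
def mu (ξ : ℚ) (u : V) (k l : ℕ) : Prop := T.muW Finset.univ ξ u k l

/-- Membership in `𝒞_ξ(u,k,l)` relative to ground set `W`: a connected
`k`-subpartition of `T_u` with `u ∈ A₁`, residue at most `l`, and conductance
at most `ξ` for every part other than `A₁`. -/
def inCW (W : Finset V) (ξ : ℚ) (u : V) {k : ℕ} (A : Fin k → Finset V) (l : ℕ) : Prop :=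
  (∀ i, (A i).Nonempty) ∧ (∀ i j, i ≠ j → Disjoint (A i) (A j)) ∧
  (∀ i, A i ⊆ T.descW W u) ∧ (∀ i, T.connectedIn (A i)) ∧
  (∀ h : 0 < k, u ∈ A ⟨0, h⟩) ∧
  (∀ i : Fin k, i.val ≠ 0 → T.cutW W (A i) / T.wsum (A i) ≤ ξ) ∧
  ((T.descW W u \ Finset.univ.biUnion A).card ≤ l)

/-- Membership in `𝒞_ξ(u,k,l)`. -/
def inC (ξ : ℚ) (u : V) {k : ℕ} (A : Fin k → Finset V) (l : ℕ) : Prop :=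
  T.inCW Finset.univ ξ u A l

/-- `γ_ξ(𝒜) = Σ_{e ∈ ∂A₁ \ {e_u}} ε_ξ(e)` relative to ground set `W`. -/
def gammaValW (W : Finset V) (ξ : ℚ) (u : V) (A1 : Finset V) : ℚ :=
  ∑ v ∈ (T.boundaryW W A1).erase u, (ξ * T.wsum (T.descW W v) + T.c v)

/-- `γ_ξ(𝒜) = Σ_{e ∈ ∂A₁ \ {e_u}} ε_ξ(e)`. -/
def gammaVal (ξ : ℚ) (u : V) (A1 : Finset V) : ℚ := T.gammaValW Finset.univ ξ u A1

/-- `Γ_ξ(u,k,l) = min over 𝒞_ξ(u,k,l) of γ_ξ`, with value `+∞` (`⊤` of `EReal`)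
when `𝒞_ξ(u,k,l)` is empty, relative to ground set `W`. -/
def GammaW (W : Finset V) (ξ : ℚ) (u : V) (k l : ℕ) : EReal :=
  sInf {x : EReal | ∃ (h : 0 < k) (A : Fin k → Finset V),
    T.inCW W ξ u A l ∧ x = ((T.gammaValW W ξ u (A ⟨0, h⟩) : ℝ) : EReal)}

/-- `Γ_ξ(u,k,l)`. -/
def Gamma (ξ : ℚ) (u : V) (k l : ℕ) : EReal := T.GammaW Finset.univ ξ u k l

end RTree
namespace RTree

variable {V : Type} [Fintype V] [DecidableEq V] (T : RTree V)

lemma root_fixed (n : ℕ) : T.parent^[n] T.root = T.root := by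
  induction n with
  | zero => rfl
  | succ n ih => rw [Function.iterate_succ_apply', ih, T.parent_root]

lemma cycle_root {b : V} {p : ℕ} (hp : 0 < p) (h : T.parent^[p] b = b) :
    b = T.root := by
  obtain ⟨j, hj⟩ := T.reaches_root b
  have hmul : ∀ c : ℕ, T.parent^[p * c] b = b := by
    intro c
    induction c with
    | zero => rfl
    | succ c ih =>
      rw [Nat.mul_succ, Function.iterate_add_apply, h, ih]
  have hle : j ≤ p * j := Nat.le_mul_of_pos_left j hp
  calc b = T.parent^[p * j] b := (hmul j).symm
    _ = T.parent^[p * j - j] (T.parent^[j] b) := by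
        rw [← Function.iterate_add_apply, Nat.sub_add_cancel hle]
    _ = T.root := by rw [hj, T.root_fixed]

lemma below_refl (u : V) : T.below u u := ⟨0, rfl⟩

lemma below_trans {a b c : V} (h1 : T.below a b) (h2 : T.below b c) :
    T.below a c := by
  obtain ⟨n, hn⟩ := h1; obtain ⟨m, hm⟩ := h2
  exact ⟨n + m, by rw [Function.iterate_add_apply, hm, hn]⟩

lemma below_antisymm {a b : V} (h1 : T.below a b) (h2 : T.below b a) :
    a = b := by
  obtain ⟨n, hn⟩ := h1; obtain ⟨m, hm⟩ := h2
  rcases Nat.eq_zero_or_pos (m + n) with h0 | hpos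
  · obtain ⟨h1, h2⟩ := Nat.add_eq_zero.mp h0
    subst h2; exact hn.symm
  · have hcyc : T.parent^[m + n] b = b := by
      rw [Function.iterate_add_apply, hn, hm]
    have hb : b = T.root := T.cycle_root hpos hcyc
    have ha : a = T.root := by rw [← hn, hb, T.root_fixed]
    rw [ha, hb]

lemma mem_desc {u v : V} : v ∈ T.desc u ↔ T.below u v := by
  simp [desc]

lemma desc_subset_of_below {a b : V} (h : T.below a b) :
    T.desc b ⊆ T.desc a := by
  intro v hv
  exact T.mem_desc.mpr (T.below_trans h (T.mem_desc.mp hv))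

lemma descW_univ (u : V) : T.descW Finset.univ u = T.desc u := by
  simp [descW]

end RTree
namespace RTree

variable {V : Type} [Fintype V] [DecidableEq V] {T : RTree V}

section child

variable {u u₁ : V} (hchild : T.parent u₁ = u ∧ u₁ ≠ u)
  (honly : ∀ v : V, T.parent v = u → v ≠ u → v = u₁)

include hchild

lemma below_child : T.below u u₁ := ⟨1, by simp [hchild.1]⟩

lemma not_mem_desc_child : u ∉ T.desc u₁ := by
  intro h
  exact hchild.2 (T.below_antisymm (T.mem_desc.mp h) (below_child hchild))

include honly

lemma desc_insert : T.desc u = insert u (T.desc u₁) := by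
  ext v
  simp only [Finset.mem_insert, T.mem_desc]
  constructor
  · rintro ⟨n, hn⟩
    induction n generalizing v with
    | zero => exact Or.inl hn
    | succ n ih =>
      rw [Function.iterate_succ_apply] at hn
      rcases ih (T.parent v) hn with hp | ⟨m, hm⟩
      · by_cases hv : v = u
        · exact Or.inl hv
        · exact Or.inr (by rw [honly v hp hv]; exact T.below_refl u₁)
      · exact Or.inr ⟨m + 1, by rw [Function.iterate_succ_apply, hm]⟩
  · rintro (rfl | h)
    · exact T.below_refl v
    · exact T.below_trans (below_child hchild) h

lemma chain_to_child {A : Finset V} :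
    ∀ (n : ℕ) (v : V), T.parent^[n] v = u → (∀ j ≤ n, T.parent^[j] v ∈ A) →
      v ≠ u → ∃ m : ℕ, T.parent^[m] v = u₁ ∧
        ∀ j ≤ m, T.parent^[j] v ∈ A ∧ T.parent^[j] v ≠ u := by
  intro n
  induction n with
  | zero => intro v hn _ hne; exact absurd hn hne
  | succ n ih =>
    intro v hn hA hne
    by_cases hp : T.parent v = u
    · refine ⟨0, by simpa using honly v hp hne, ?_⟩
      intro j hj
      have : j = 0 := Nat.le_zero.mp hj
      subst this
      exact ⟨by simpa using hA 0 (Nat.zero_le _), by simpa using hne⟩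
    · rw [Function.iterate_succ_apply] at hn
      have hA' : ∀ j ≤ n, T.parent^[j] (T.parent v) ∈ A := by
        intro j hj
        rw [← Function.iterate_succ_apply]
        exact hA (j + 1) (by omega)
      obtain ⟨m, hm, hchain⟩ := ih (T.parent v) hn hA' hp
      refine ⟨m + 1, by rw [Function.iterate_succ_apply]; exact hm, ?_⟩
      intro j hj
      rcases Nat.eq_zero_or_pos j with rfl | hjpos
      · exact ⟨by simpa using hA 0 (Nat.zero_le _), by simpa using hne⟩
      · rw [show j = (j - 1) + 1 by omega, Function.iterate_succ_apply]
        exact hchain (j - 1) (by omega)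

end child

lemma chains_to_top {u : V} {A : Finset V} (hu : u ∈ A) (hconn : T.connectedIn A)
    (hsub : ∀ v ∈ A, T.below u v) :
    ∀ v ∈ A, ∃ n, T.parent^[n] v = u ∧ ∀ m ≤ n, T.parent^[m] v ∈ A := by
  obtain ⟨a, ha, hch⟩ := hconn
  obtain ⟨n, hn, -⟩ := hch u hu
  have : u = a := T.below_antisymm (hsub a ha) ⟨n, hn⟩
  subst this
  exact hch

end RTree
namespace RTree

variable {V : Type} [Fintype V] [DecidableEq V] {T : RTree V}

section child2

variable {u u₁ : V} (hchild : T.parent u₁ = u ∧ u₁ ≠ u)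
  (honly : ∀ v : V, T.parent v = u → v ≠ u → v = u₁)

include hchild honly

lemma part_subset_desc_child {A : Finset V} (hsub : A ⊆ T.desc u)
    (hconn : T.connectedIn A) (hu : u ∉ A) : A ⊆ T.desc u₁ := by
  obtain ⟨a, ha, hch⟩ := hconn
  have ha1 : a ∈ T.desc u₁ := by
    have h := hsub ha
    rw [desc_insert hchild honly] at h
    rcases Finset.mem_insert.mp h with rfl | h'
    · exact absurd ha hu
    · exact h'
  intro v hv
  obtain ⟨n, hn, -⟩ := hch v hv
  exact T.desc_subset_of_below (T.mem_desc.mp ha1) (T.mem_desc.mpr ⟨n, hn⟩)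

lemma u₁_mem_of_ne {A : Finset V} (hsub : A ⊆ T.desc u) (hconn : T.connectedIn A)
    (hu : u ∈ A) {v : V} (hv : v ∈ A) (hne : v ≠ u) : u₁ ∈ A := by
  have hchains := T.chains_to_top hu hconn (fun w hw => T.mem_desc.mp (hsub hw))
  obtain ⟨n, hn, hall⟩ := hchains v hv
  obtain ⟨m, hm, hc⟩ := chain_to_child hchild honly n v hn hall hne
  rw [← hm]; exact (hc m le_rfl).1

lemma sdiff_connected {A : Finset V} (hsub : A ⊆ T.desc u) (hconn : T.connectedIn A)
    (hu : u ∈ A) (hu₁ : u₁ ∈ A) : T.connectedIn (A \ {u}) := by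
  refine ⟨u₁, Finset.mem_sdiff.mpr ⟨hu₁, by simp [hchild.2]⟩, ?_⟩
  intro v hv
  obtain ⟨hvA, hvne⟩ := Finset.mem_sdiff.mp hv
  have hvne' : v ≠ u := by simpa using hvne
  have hchains := T.chains_to_top hu hconn (fun w hw => T.mem_desc.mp (hsub hw))
  obtain ⟨n, hn, hall⟩ := hchains v hvA
  obtain ⟨m, hm, hc⟩ := chain_to_child hchild honly n v hn hall hvne'
  refine ⟨m, hm, fun j hj => ?_⟩
  rcases hc j hj with ⟨h1, h2⟩
  exact Finset.mem_sdiff.mpr ⟨h1, by simpa using h2⟩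

lemma insert_connected {B : Finset V} (hsub : B ⊆ T.desc u₁) (hconn : T.connectedIn B)
    (hu₁ : u₁ ∈ B) : T.connectedIn (insert u B) := by
  refine ⟨u, Finset.mem_insert_self u B, ?_⟩
  intro v hv
  rcases Finset.mem_insert.mp hv with rfl | hvB
  · exact ⟨0, rfl, fun m hm => by
      have : m = 0 := Nat.le_zero.mp hm
      subst this
      exact Finset.mem_insert_self v B⟩
  · have hchains := T.chains_to_top hu₁ hconn (fun w hw => T.mem_desc.mp (hsub hw))
    obtain ⟨n, hn, hall⟩ := hchains v hvB
    refine ⟨n + 1, by rw [Function.iterate_succ_apply', hn, hchild.1], ?_⟩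
    intro m hm
    rcases Nat.lt_or_ge m (n + 1) with h | h
    · exact Finset.mem_insert_of_mem (hall m (by omega))
    · have : m = n + 1 := by omega
      subst this
      rw [Function.iterate_succ_apply', hn, hchild.1]
      exact Finset.mem_insert_self u B

lemma boundary_single_erase :
    (T.boundaryW Finset.univ ({u} : Finset V)).erase u = {u₁} := by
  ext v
  simp only [boundaryW, Finset.mem_erase, Finset.mem_filter, Finset.mem_univ,
    true_and, Finset.mem_singleton, Xor']
  constructor
  · rintro ⟨hne, (⟨h1, -⟩ | ⟨h1, h2⟩)⟩
    · exact absurd h1 hne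
    · exact honly v h1 (by simpa using h2)
  · rintro rfl
    exact ⟨hchild.2, Or.inr ⟨hchild.1, hchild.2⟩⟩

lemma gamma_single (ξ : ℚ) :
    T.gammaValW Finset.univ ξ u ({u} : Finset V) = T.eps ξ u₁ := by
  unfold gammaValW
  rw [boundary_single_erase hchild honly, Finset.sum_singleton, T.descW_univ, eps]

lemma parent_u_not_mem_desc_child : T.parent u ∉ T.desc u₁ := by
  intro h
  obtain ⟨m, hm⟩ := T.mem_desc.mp h
  exact not_mem_desc_child hchild (T.mem_desc.mpr ⟨m + 1,
    by rw [Function.iterate_succ_apply, hm]⟩)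

lemma boundary_sdiff_erase {A : Finset V} (hsub : A ⊆ T.desc u)
    (hu : u ∈ A) (hu₁ : u₁ ∈ A) :
    (T.boundaryW Finset.univ A).erase u
      = (T.boundaryW Finset.univ (A \ {u})).erase u₁ := by
  have hsub' : A \ {u} ⊆ T.desc u₁ := by
    intro v hv
    obtain ⟨hvA, hvne⟩ := Finset.mem_sdiff.mp hv
    have h := hsub hvA
    rw [desc_insert hchild honly] at h
    rcases Finset.mem_insert.mp h with rfl | h'
    · exact absurd (Finset.mem_singleton_self _) hvne
    · exact h'
  ext v
  simp only [boundaryW, Finset.mem_erase, Finset.mem_filter, Finset.mem_univ,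
    true_and, xor_def]
  by_cases hvu : v = u
  · subst hvu
    constructor
    · rintro ⟨hne, -⟩; exact absurd rfl hne
    · rintro ⟨-, (⟨h1, -⟩ | ⟨hp, -⟩)⟩
      · exact absurd h1 (by simp)
      · exact absurd (hsub' hp) (parent_u_not_mem_desc_child hchild honly)
  · by_cases hvu₁ : v = u₁
    · subst hvu₁
      constructor
      · rintro ⟨-, (⟨-, h2⟩ | ⟨-, h2⟩)⟩
        · exact absurd (by rw [hchild.1]; exact hu) h2
        · exact absurd hu₁ h2
      · rintro ⟨hne, -⟩; exact absurd rfl hne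
    · have hpv : T.parent v ≠ u := fun hp => hvu₁ (honly v hp hvu)
      have hv' : v ∈ A \ {u} ↔ v ∈ A := by simp [Finset.mem_sdiff, hvu]
      have hpv' : T.parent v ∈ A \ {u} ↔ T.parent v ∈ A := by
        simp [Finset.mem_sdiff, hpv]
      constructor
      · rintro ⟨-, (⟨h1, h2⟩ | ⟨h1, h2⟩)⟩
        · exact ⟨hvu₁, Or.inl ⟨hv'.mpr h1, fun h => h2 (hpv'.mp h)⟩⟩
        · exact ⟨hvu₁, Or.inr ⟨hpv'.mpr h1, fun h => h2 (hv'.mp h)⟩⟩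
      · rintro ⟨-, (⟨h1, h2⟩ | ⟨h1, h2⟩)⟩
        · exact ⟨hvu, Or.inl ⟨hv'.mp h1, fun h => h2 (hpv'.mpr h)⟩⟩
        · exact ⟨hvu, Or.inr ⟨hpv'.mp h1, fun h => h2 (hv'.mpr h)⟩⟩

lemma gamma_sdiff (ξ : ℚ) {A : Finset V} (hsub : A ⊆ T.desc u)
    (hu : u ∈ A) (hu₁ : u₁ ∈ A) :
    T.gammaValW Finset.univ ξ u A = T.gammaValW Finset.univ ξ u₁ (A \ {u}) := by
  unfold gammaValW
  rw [boundary_sdiff_erase hchild honly hsub hu hu₁]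

end child2

end RTree
/-- base of Lemma 2: if `u` has the single child `u₁`, then
`Γ_ξ(u,k,l)` equals `min{ξ·ω(T_{u₁}) + c(uu₁), Γ_ξ(u₁,k,l)}` when
`μ_ξ(u₁,k−1,l) = 1`, and `Γ_ξ(u₁,k,l)` otherwise. -/
theorem stmt13 {V : Type} [Fintype V] [DecidableEq V] (T : RTree V)
    (ξ : ℚ) (hξ : 0 ≤ ξ) (u u₁ : V)
    (hchild : T.parent u₁ = u ∧ u₁ ≠ u)
    (honly : ∀ v : V, T.parent v = u → v ≠ u → v = u₁)
    (k l : ℕ) (hk : 1 ≤ k) :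
    (T.mu ξ u₁ (k - 1) l →
      T.Gamma ξ u k l = min (((T.eps ξ u₁ : ℚ) : ℝ) : EReal) (T.Gamma ξ u₁ k l)) ∧
    (¬ T.mu ξ u₁ (k - 1) l → T.Gamma ξ u k l = T.Gamma ξ u₁ k l) := by
  classical
  have hk0 : 0 < k := hk
  have hdesc : T.desc u = insert u (T.desc u₁) := RTree.desc_insert hchild honly
  have hunotin : u ∉ T.desc u₁ := RTree.not_mem_desc_child hchild
  have hu1desc : T.desc u₁ ⊆ T.desc u := by
    rw [hdesc]; exact Finset.subset_insert _ _
  have humem : u ∈ T.desc u := T.mem_desc.mpr (T.below_refl u)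
  have hsingle_conn : T.connectedIn ({u} : Finset V) := by
    refine ⟨u, Finset.mem_singleton_self u, fun v hv => ?_⟩
    rw [Finset.mem_singleton] at hv; subst hv
    exact ⟨0, rfl, fun m hm => by
      have hm0 : m = 0 := Nat.le_zero.mp hm
      subst hm0; exact Finset.mem_singleton_self v⟩
  -- `keyB`: any witness at u₁ lifts to a witness at u with the same γ-value
  have keyB : ∀ B : Fin k → Finset V, T.inCW Finset.univ ξ u₁ B l →
      ∃ A : Fin k → Finset V, T.inCW Finset.univ ξ u A l ∧
        T.gammaValW Finset.univ ξ u (A ⟨0, hk0⟩)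
          = T.gammaValW Finset.univ ξ u₁ (B ⟨0, hk0⟩) := by
    rintro B ⟨hBne, hBdisj, hBsub, hBconn, hBmem, hBcond, hBres⟩
    have hBsub' : ∀ i, B i ⊆ T.desc u₁ := by
      intro i; have h := hBsub i; rwa [T.descW_univ] at h
    have hu1B : u₁ ∈ B ⟨0, hk0⟩ := hBmem hk0
    obtain ⟨A, hA0, hAo⟩ : ∃ A : Fin k → Finset V,
        (∀ i : Fin k, i.val = 0 → A i = insert u (B ⟨0, hk0⟩)) ∧
        (∀ i : Fin k, i.val ≠ 0 → A i = B i) := by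
      refine ⟨fun i => if i.val = 0 then insert u (B ⟨0, hk0⟩) else B i,
        fun i hi => if_pos hi, fun i hi => if_neg hi⟩
    have hi0eq : ∀ i : Fin k, i.val = 0 → i = ⟨0, hk0⟩ := fun i hi => Fin.ext hi
    have hAval : A ⟨0, hk0⟩ = insert u (B ⟨0, hk0⟩) := hA0 ⟨0, hk0⟩ rfl
    have hinsub : insert u (B ⟨0, hk0⟩) ⊆ T.desc u := by
      rw [hdesc]; exact Finset.insert_subset_insert _ (hBsub' _)
    refine ⟨A, ⟨?_, ?_, ?_, ?_, ?_, ?_, ?_⟩, ?_⟩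
    · intro i
      by_cases hi : i.val = 0
      · rw [hA0 i hi]; exact Finset.insert_nonempty _ _
      · rw [hAo i hi]; exact hBne i
    · intro i j hij
      by_cases hi : i.val = 0 <;> by_cases hj : j.val = 0
      · exact absurd ((hi0eq i hi).trans (hi0eq j hj).symm) hij
      · rw [hA0 i hi, hAo j hj, Finset.disjoint_insert_left]
        refine ⟨fun hc => hunotin (hBsub' j hc), ?_⟩
        rw [← hi0eq i hi]
        exact hBdisj i j hij
      · rw [hAo i hi, hA0 j hj, Finset.disjoint_insert_right]
        refine ⟨fun hc => hunotin (hBsub' i hc), ?_⟩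
        rw [← hi0eq j hj]
        exact hBdisj i j hij
      · rw [hAo i hi, hAo j hj]; exact hBdisj i j hij
    · intro i
      rw [T.descW_univ]
      by_cases hi : i.val = 0
      · rw [hA0 i hi]; exact hinsub
      · rw [hAo i hi]; exact (hBsub' i).trans hu1desc
    · intro i
      by_cases hi : i.val = 0
      · rw [hA0 i hi]
        exact RTree.insert_connected hchild honly (hBsub' _) (hBconn _) hu1B
      · rw [hAo i hi]; exact hBconn i
    · intro hpos
      rw [hA0 ⟨0, hpos⟩ rfl]; exact Finset.mem_insert_self _ _
    · intro i hi
      rw [hAo i hi]; exact hBcond i hi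
    · have hset : T.descW Finset.univ u \ Finset.univ.biUnion A
          = T.descW Finset.univ u₁ \ Finset.univ.biUnion B := by
        ext v
        simp only [Finset.mem_sdiff, Finset.mem_biUnion, Finset.mem_univ, true_and,
          not_exists, T.descW_univ]
        constructor
        · rintro ⟨hv, hnA⟩
          have hvu : v ≠ u := by
            rintro rfl
            exact hnA ⟨0, hk0⟩ (by rw [hAval]; exact Finset.mem_insert_self _ _)
          rw [hdesc, Finset.mem_insert] at hv
          refine ⟨hv.resolve_left hvu, fun i hc => ?_⟩
          by_cases hi : i.val = 0
          · exact hnA ⟨0, hk0⟩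
              (by rw [hAval]; exact Finset.mem_insert_of_mem ((hi0eq i hi) ▸ hc))
          · exact hnA i (by rw [hAo i hi]; exact hc)
        · rintro ⟨hv, hnB⟩
          refine ⟨hu1desc hv, fun i hc => ?_⟩
          by_cases hi : i.val = 0
          · rw [hA0 i hi, Finset.mem_insert] at hc
            rcases hc with rfl | hc
            · exact hunotin hv
            · exact hnB _ hc
          · rw [hAo i hi] at hc; exact hnB i hc
      rw [hset]; exact hBres
    · rw [hAval, RTree.gamma_sdiff hchild honly ξ hinsub
        (Finset.mem_insert_self _ _) (Finset.mem_insert_of_mem hu1B)]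
      congr 1
      ext w
      simp only [Finset.mem_sdiff, Finset.mem_insert, Finset.mem_singleton]
      constructor
      · rintro ⟨rfl | hw, hne⟩
        · exact absurd rfl hne
        · exact hw
      · intro hw
        exact ⟨Or.inr hw, by rintro rfl; exact hunotin (hBsub' _ hw)⟩
  -- `keyA`: any witness at u splits
  have keyA : ∀ A : Fin k → Finset V, T.inCW Finset.univ ξ u A l →
      (T.gammaValW Finset.univ ξ u (A ⟨0, hk0⟩) = T.eps ξ u₁ ∧ T.mu ξ u₁ (k - 1) l) ∨
      ∃ B : Fin k → Finset V, T.inCW Finset.univ ξ u₁ B l ∧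
        T.gammaValW Finset.univ ξ u (A ⟨0, hk0⟩)
          = T.gammaValW Finset.univ ξ u₁ (B ⟨0, hk0⟩) := by
    rintro A ⟨hAne, hAdisj, hAsub, hAconn, hAmem, hAcond, hAres⟩
    have hAsub' : ∀ i, A i ⊆ T.desc u := fun i => by
      have h := hAsub i; rwa [T.descW_univ] at h
    have huA : u ∈ A ⟨0, hk0⟩ := hAmem hk0
    have hi0eq : ∀ i : Fin k, i.val = 0 → i = ⟨0, hk0⟩ := fun i hi => Fin.ext hi
    have hother : ∀ i : Fin k, i.val ≠ 0 → A i ⊆ T.desc u₁ := by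
      intro i hi
      refine RTree.part_subset_desc_child hchild honly (hAsub' i) (hAconn i) ?_
      intro hc
      exact Finset.disjoint_left.mp
        (hAdisj i ⟨0, hk0⟩ (fun he => hi (by rw [he]))) hc huA
    by_cases hu₁A : u₁ ∈ A ⟨0, hk0⟩
    · right
      obtain ⟨B, hB0, hBo⟩ : ∃ B : Fin k → Finset V,
          (∀ i : Fin k, i.val = 0 → B i = A ⟨0, hk0⟩ \ {u}) ∧
          (∀ i : Fin k, i.val ≠ 0 → B i = A i) :=
        ⟨fun i => if i.val = 0 then A ⟨0, hk0⟩ \ {u} else A i,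
          fun i hi => if_pos hi, fun i hi => if_neg hi⟩
      have hBval : B ⟨0, hk0⟩ = A ⟨0, hk0⟩ \ {u} := hB0 _ rfl
      have hsd : A ⟨0, hk0⟩ \ {u} ⊆ T.desc u₁ := by
        intro v hv
        obtain ⟨hvA, hvne⟩ := Finset.mem_sdiff.mp hv
        have h := hAsub' _ hvA
        rw [hdesc, Finset.mem_insert] at h
        exact h.resolve_left (by simpa using hvne)
      have hu₁B : u₁ ∈ A ⟨0, hk0⟩ \ {u} :=
        Finset.mem_sdiff.mpr ⟨hu₁A, by simpa using hchild.2⟩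
      have hBsubA : ∀ i, B i ⊆ A i := by
        intro i
        by_cases hi : i.val = 0
        · rw [hi0eq i hi, hBval]; exact Finset.sdiff_subset
        · rw [hBo i hi]
      refine ⟨B, ⟨?_, ?_, ?_, ?_, ?_, ?_, ?_⟩, ?_⟩
      · intro i
        by_cases hi : i.val = 0
        · rw [hi0eq i hi, hBval]; exact ⟨u₁, hu₁B⟩
        · rw [hBo i hi]; exact hAne i
      · intro i j hij
        exact Disjoint.mono (hBsubA i) (hBsubA j) (hAdisj i j hij)
      · intro i
        rw [T.descW_univ]
        by_cases hi : i.val = 0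
        · rw [hi0eq i hi, hBval]; exact hsd
        · rw [hBo i hi]; exact hother i hi
      · intro i
        by_cases hi : i.val = 0
        · rw [hi0eq i hi, hBval]
          exact RTree.sdiff_connected hchild honly (hAsub' _) (hAconn _) huA hu₁A
        · rw [hBo i hi]; exact hAconn i
      · intro hpos
        rw [hB0 _ rfl]; exact hu₁B
      · intro i hi
        rw [hBo i hi]; exact hAcond i hi
      · have hset : T.descW Finset.univ u₁ \ Finset.univ.biUnion B
            = T.descW Finset.univ u \ Finset.univ.biUnion A := by
          ext v
          simp only [Finset.mem_sdiff, Finset.mem_biUnion, Finset.mem_univ, true_and,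
            not_exists, T.descW_univ]
          constructor
          · rintro ⟨hv, hnB⟩
            have hvu : v ≠ u := by rintro rfl; exact hunotin hv
            refine ⟨hu1desc hv, fun i hc => ?_⟩
            by_cases hi : i.val = 0
            · refine hnB ⟨0, hk0⟩ ?_
              rw [hBval]
              exact Finset.mem_sdiff.mpr ⟨(hi0eq i hi) ▸ hc, by simpa using hvu⟩
            · exact hnB i (by rw [hBo i hi]; exact hc)
          · rintro ⟨hv, hnA⟩
            have hvu : v ≠ u := by rintro rfl; exact hnA _ huA
            rw [hdesc, Finset.mem_insert] at hv
            refine ⟨hv.resolve_left hvu, fun i hc => ?_⟩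
            by_cases hi : i.val = 0
            · rw [hB0 i hi] at hc
              exact hnA _ ((hi0eq i hi) ▸ (Finset.mem_sdiff.mp hc).1)
            · rw [hBo i hi] at hc; exact hnA i hc
        rw [hset]; exact hAres
      · rw [hBval]
        exact RTree.gamma_sdiff hchild honly ξ (hAsub' _) huA hu₁A
    · left
      have hA0 : A ⟨0, hk0⟩ = {u} := by
        rw [Finset.eq_singleton_iff_unique_mem]
        refine ⟨huA, fun v hv => ?_⟩
        by_contra hne
        exact hu₁A (RTree.u₁_mem_of_ne hchild honly (hAsub' _) (hAconn _) huA hv hne)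
      constructor
      · rw [hA0]; exact RTree.gamma_single hchild honly ξ
      · obtain ⟨C, hC⟩ : ∃ C : Fin (k - 1) → Finset V,
            ∀ (j : Fin (k - 1)) (pf : j.val + 1 < k), C j = A ⟨j.val + 1, pf⟩ :=
          ⟨fun j => A ⟨j.val + 1, by have := j.isLt; omega⟩, fun j pf => rfl⟩
        have hpf : ∀ j : Fin (k - 1), j.val + 1 < k := fun j => by
          have := j.isLt; omega
        refine ⟨C, ?_, ?_, ?_, ?_, ?_, ?_⟩
        · intro j; rw [hC j (hpf j)]; exact hAne _
        · intro i j hij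
          rw [hC i (hpf i), hC j (hpf j)]
          refine hAdisj _ _ fun he => hij ?_
          rw [Fin.mk.injEq] at he
          exact Fin.ext (by omega)
        · intro j
          rw [T.descW_univ, hC j (hpf j)]
          exact hother _ (Nat.succ_ne_zero _)
        · intro j; rw [hC j (hpf j)]; exact hAconn _
        · intro j; rw [hC j (hpf j)]; exact hAcond _ (Nat.succ_ne_zero _)
        · have hset : T.descW Finset.univ u₁ \ Finset.univ.biUnion C
              = T.descW Finset.univ u \ Finset.univ.biUnion A := by
            ext v
            simp only [Finset.mem_sdiff, Finset.mem_biUnion, Finset.mem_univ, true_and,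
              not_exists, T.descW_univ]
            constructor
            · rintro ⟨hv, hnC⟩
              refine ⟨hu1desc hv, fun i hc => ?_⟩
              by_cases hi : i.val = 0
              · rw [hi0eq i hi, hA0, Finset.mem_singleton] at hc
                exact hunotin (hc ▸ hv)
              · have pf2 : (i.val - 1) + 1 < k := by have := i.isLt; omega
                have heqA : C ⟨i.val - 1, by have := i.isLt; omega⟩ = A i := by
                  rw [hC _ pf2]
                  exact congrArg A (Fin.ext (show i.val - 1 + 1 = i.val by omega))
                exact hnC _ (heqA ▸ hc)
            · rintro ⟨hv, hnA⟩
              have hvu : v ≠ u := by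
                rintro rfl
                exact hnA ⟨0, hk0⟩ (by rw [hA0]; exact Finset.mem_singleton_self v)
              rw [hdesc, Finset.mem_insert] at hv
              refine ⟨hv.resolve_left hvu, fun j hc => ?_⟩
              rw [hC j (hpf j)] at hc
              exact hnA _ hc
          rw [hset]; exact hAres
  -- `keyC`: a μ-witness yields a witness at u of γ-value ε
  have keyC : T.mu ξ u₁ (k - 1) l →
      ∃ A : Fin k → Finset V, T.inCW Finset.univ ξ u A l ∧
        T.gammaValW Finset.univ ξ u (A ⟨0, hk0⟩) = T.eps ξ u₁ := by
    rintro ⟨C, hCne, hCdisj, hCsub, hCconn, hCcond, hCres⟩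
    have hCsub' : ∀ j, C j ⊆ T.desc u₁ := fun j => by
      have h := hCsub j; rwa [T.descW_univ] at h
    obtain ⟨A, hA0, hAo⟩ : ∃ A : Fin k → Finset V,
        (∀ i : Fin k, i.val = 0 → A i = {u}) ∧
        (∀ (i : Fin k) (j : Fin (k - 1)), i.val = j.val + 1 → A i = C j) := by
      refine ⟨fun i => if h0 : i.val = 0 then {u}
        else C ⟨i.val - 1, by have := i.isLt; omega⟩, fun i hi => dif_pos hi,
        fun i j hij => ?_⟩
      have hcond : ¬ i.val = 0 := by omega
      exact (dif_neg hcond).trans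
        (congrArg C (Fin.ext (show i.val - 1 = j.val by omega)))
    have hAval : A ⟨0, hk0⟩ = {u} := hA0 _ rfl
    have hi0eq : ∀ i : Fin k, i.val = 0 → i = ⟨0, hk0⟩ := fun i hi => Fin.ext hi
    have hAC : ∀ i : Fin k, i.val ≠ 0 →
        ∃ j : Fin (k - 1), i.val = j.val + 1 ∧ A i = C j := by
      intro i hi
      refine ⟨⟨i.val - 1, by have := i.isLt; omega⟩, ?_, hAo i _ ?_⟩
      · show i.val = i.val - 1 + 1
        omega
      · show i.val = i.val - 1 + 1
        omega
    refine ⟨A, ⟨?_, ?_, ?_, ?_, ?_, ?_, ?_⟩, ?_⟩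
    · intro i
      by_cases hi : i.val = 0
      · rw [hA0 i hi]; exact Finset.singleton_nonempty u
      · obtain ⟨j, -, hj⟩ := hAC i hi; rw [hj]; exact hCne j
    · intro i j hij
      by_cases hi : i.val = 0 <;> by_cases hj : j.val = 0
      · exact absurd ((hi0eq i hi).trans (hi0eq j hj).symm) hij
      · obtain ⟨j', -, hj'⟩ := hAC j hj
        rw [hA0 i hi, hj', Finset.disjoint_singleton_left]
        exact fun hc => hunotin (hCsub' j' hc)
      · obtain ⟨i', -, hi'⟩ := hAC i hi
        rw [hA0 j hj, hi', Finset.disjoint_singleton_right]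
        exact fun hc => hunotin (hCsub' i' hc)
      · obtain ⟨i', hiv, hi'⟩ := hAC i hi
        obtain ⟨j', hjv, hj'⟩ := hAC j hj
        have hij' : i' ≠ j' := by
          intro hc
          have hcv : i'.val = j'.val := congrArg Fin.val hc
          exact hij (Fin.ext (by omega))
        rw [hi', hj']
        exact hCdisj i' j' hij'
    · intro i
      rw [T.descW_univ]
      by_cases hi : i.val = 0
      · rw [hA0 i hi, Finset.singleton_subset_iff]; exact humem
      · obtain ⟨j, -, hj⟩ := hAC i hi
        rw [hj]; exact (hCsub' j).trans hu1desc
    · intro i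
      by_cases hi : i.val = 0
      · rw [hA0 i hi]; exact hsingle_conn
      · obtain ⟨j, -, hj⟩ := hAC i hi; rw [hj]; exact hCconn j
    · intro hpos
      rw [hA0 _ rfl]; exact Finset.mem_singleton_self u
    · intro i hi
      obtain ⟨j, -, hj⟩ := hAC i hi; rw [hj]; exact hCcond j
    · have hset : T.descW Finset.univ u \ Finset.univ.biUnion A
          = T.descW Finset.univ u₁ \ Finset.univ.biUnion C := by
        ext v
        simp only [Finset.mem_sdiff, Finset.mem_biUnion, Finset.mem_univ, true_and,
          not_exists, T.descW_univ]
        constructor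
        · rintro ⟨hv, hnA⟩
          have hvu : v ≠ u := by
            rintro rfl
            exact hnA ⟨0, hk0⟩ (by rw [hAval]; exact Finset.mem_singleton_self v)
          rw [hdesc, Finset.mem_insert] at hv
          refine ⟨hv.resolve_left hvu, fun j hc => ?_⟩
          have hj : j.val + 1 < k := by have := j.isLt; omega
          refine hnA ⟨j.val + 1, hj⟩ ?_
          rw [hAo ⟨j.val + 1, hj⟩ j rfl]
          exact hc
        · rintro ⟨hv, hnC⟩
          refine ⟨hu1desc hv, fun i hc => ?_⟩
          by_cases hi : i.val = 0
          · rw [hA0 i hi, Finset.mem_singleton] at hc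
            exact hunotin (hc ▸ hv)
          · obtain ⟨j, -, hj⟩ := hAC i hi
            rw [hj] at hc
            exact hnC j hc
      rw [hset]; exact hCres
    · rw [hAval]; exact RTree.gamma_single hchild honly ξ
  -- assembly
  have hG0 : T.Gamma ξ u k l = sInf {x : EReal | ∃ (h : 0 < k) (A : Fin k → Finset V),
      T.inCW Finset.univ ξ u A l ∧
      x = ((T.gammaValW Finset.univ ξ u (A ⟨0, h⟩) : ℝ) : EReal)} := rfl
  have hG1 : T.Gamma ξ u₁ k l = sInf {x : EReal | ∃ (h : 0 < k) (A : Fin k → Finset V),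
      T.inCW Finset.univ ξ u₁ A l ∧
      x = ((T.gammaValW Finset.univ ξ u₁ (A ⟨0, h⟩) : ℝ) : EReal)} := rfl
  constructor
  · intro hmu
    rw [hG0, hG1]
    have hSeq : {x : EReal | ∃ (h : 0 < k) (A : Fin k → Finset V),
        T.inCW Finset.univ ξ u A l ∧
        x = ((T.gammaValW Finset.univ ξ u (A ⟨0, h⟩) : ℝ) : EReal)}
        = insert (((T.eps ξ u₁ : ℚ) : ℝ) : EReal)
          {x : EReal | ∃ (h : 0 < k) (A : Fin k → Finset V),
            T.inCW Finset.univ ξ u₁ A l ∧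
            x = ((T.gammaValW Finset.univ ξ u₁ (A ⟨0, h⟩) : ℝ) : EReal)} := by
      ext x
      simp only [Set.mem_setOf_eq, Set.mem_insert_iff]
      constructor
      · rintro ⟨h, A, hA, rfl⟩
        rcases keyA A hA with ⟨heq, -⟩ | ⟨B, hB, heq⟩
        · left
          rw [show (⟨0, h⟩ : Fin k) = ⟨0, hk0⟩ from rfl, heq]
        · right
          exact ⟨hk0, B, hB,
            by rw [show (⟨0, h⟩ : Fin k) = ⟨0, hk0⟩ from rfl, heq]⟩
      · rintro (rfl | ⟨h, B, hB, rfl⟩)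
        · obtain ⟨A, hA, heq⟩ := keyC hmu
          exact ⟨hk0, A, hA, by rw [heq]⟩
        · obtain ⟨A, hA, heq⟩ := keyB B hB
          exact ⟨hk0, A, hA,
            by rw [show (⟨0, h⟩ : Fin k) = ⟨0, hk0⟩ from rfl, ← heq]⟩
    rw [hSeq, sInf_insert]
  · intro hmu
    rw [hG0, hG1]
    have hSeq : {x : EReal | ∃ (h : 0 < k) (A : Fin k → Finset V),
        T.inCW Finset.univ ξ u A l ∧
        x = ((T.gammaValW Finset.univ ξ u (A ⟨0, h⟩) : ℝ) : EReal)}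
        = {x : EReal | ∃ (h : 0 < k) (A : Fin k → Finset V),
            T.inCW Finset.univ ξ u₁ A l ∧
            x = ((T.gammaValW Finset.univ ξ u₁ (A ⟨0, h⟩) : ℝ) : EReal)} := by
      ext x
      simp only [Set.mem_setOf_eq]
      constructor
      · rintro ⟨h, A, hA, rfl⟩
        rcases keyA A hA with ⟨-, hm⟩ | ⟨B, hB, heq⟩
        · exact absurd hm hmu
        · exact ⟨hk0, B, hB,
            by rw [show (⟨0, h⟩ : Fin k) = ⟨0, hk0⟩ from rfl, heq]⟩
      · rintro ⟨h, B, hB, rfl⟩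
        obtain ⟨A, hA, heq⟩ := keyB B hB
        exact ⟨hk0, A, hA,
          by rw [show (⟨0, h⟩ : Fin k) = ⟨0, hk0⟩ from rfl, ← heq]⟩
    rw [hSeq]
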